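/- arXiv:1108.1854 — 2 statements merged into one kernel-verified Lean document; each statement's English description precedes it below -/
import Mathlib

section
/- Let A ∈ ℝ^{n₁×n₁}, B ∈ ℝ^{n₁×n₂}, C ∈ ℝ^{N×n₁}, Γ ∈ ℝ^{m×m}, D ∈ ℝ^{n₂×m}. Suppose (A, C) is observable, (Γ, D) is observable, and no eigenvalue of Γ is a transmission zero of the system (A, B, C) (i.e., for every eigenvalue λ of Γ, the matrix [[A − λI, B], [C, 0]] has full column rank n₁ + n₂). Then the pair (Ā, C̄) is observable, where Ā = [[A, BD], [0, Γ]] ∈ ℝ^{(n₁+m)×(n₁+m)} and C̄ = [C, 0] ∈ ℝ^{N×(n₁+m)}. -/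
open Matrix

/-- Hautus-type observability of a pair `(M, L)` with state index type `d`. -/
def Observable {d N : Type*} [Fintype d] [Fintype N]
    (M : Matrix d d ℝ) (L : Matrix N d ℝ) : Prop :=
  ∀ (μ : ℂ) (v : d → ℂ),
    (M.map (Complex.ofReal)) *ᵥ v = μ • v → (L.map (Complex.ofReal)) *ᵥ v = 0 → v = 0

theorem stmt0 {n₁ n₂ m N : ℕ}
    (A : Matrix (Fin n₁) (Fin n₁) ℝ) (B : Matrix (Fin n₁) (Fin n₂) ℝ)
    (C : Matrix (Fin N) (Fin n₁) ℝ)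
    (Γ : Matrix (Fin m) (Fin m) ℝ) (D : Matrix (Fin n₂) (Fin m) ℝ)
    (hAC : Observable A C) (hΓD : Observable Γ D)
    (htz : ∀ μ : ℂ, (∃ v : Fin m → ℂ, v ≠ 0 ∧ (Γ.map Complex.ofReal) *ᵥ v = μ • v) →
      (Matrix.fromBlocks (A.map Complex.ofReal - μ • 1) (B.map Complex.ofReal)
        (C.map Complex.ofReal) 0).rank = n₁ + n₂) :
    Observable (Matrix.fromBlocks A (B * D) 0 Γ)
      (Matrix.of fun (i : Fin N) (j : Fin n₁ ⊕ Fin m) => Sum.elim (C i) (fun _ => (0 : ℝ)) j) := by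
  intro μ v hM hL
  set x : Fin n₁ → ℂ := v ∘ Sum.inl with hx
  set z : Fin m → ℂ := v ∘ Sum.inr with hz
  have hv : v = Sum.elim x z := by ext (j | j) <;> rfl
  -- decompose the eigen-equation
  rw [Matrix.fromBlocks_map, hv, Matrix.fromBlocks_mulVec] at hM
  have hM' := hM
  have h1 : (A.map Complex.ofReal) *ᵥ x + ((B*D).map Complex.ofReal) *ᵥ z = μ • x := by
    ext i
    have := congrFun hM' (Sum.inl i)
    simpa using this
  have h2 : (Γ.map Complex.ofReal) *ᵥ z = μ • z := by
    ext i
    have := congrFun hM' (Sum.inr i)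
    simpa using this
  -- output equation: C x = 0
  have h3 : (C.map Complex.ofReal) *ᵥ x = 0 := by
    ext i
    have := congrFun hL i
    simp only [Matrix.mulVec, dotProduct, Fintype.sum_sum_type, Matrix.map_apply,
      Matrix.of_apply, Pi.zero_apply] at this ⊢
    simpa [hx] using this
  by_cases hzz : z = 0
  · -- then A x = μ x, C x = 0
    have hx0 : x = 0 := by
      apply hAC μ x _ h3
      rw [hzz] at h1
      simpa using h1
    rw [hv, hx0, hzz]; ext (j | j) <;> rfl
  · exfalso
    have hrank := htz μ ⟨z, hzz, h2⟩
    set R := Matrix.fromBlocks (A.map Complex.ofReal - μ • 1) (B.map Complex.ofReal)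
        (C.map Complex.ofReal) (0 : Matrix (Fin N) (Fin n₂) ℂ) with hR
    -- the vector (x, D z) is in the kernel of R
    have hker : R *ᵥ Sum.elim x ((D.map Complex.ofReal) *ᵥ z) = 0 := by
      rw [hR, Matrix.fromBlocks_mulVec]
      have hBD : ((B*D).map Complex.ofReal) = (B.map Complex.ofReal) * (D.map Complex.ofReal) := by
        ext i j; simp [Matrix.mul_apply, Matrix.map_apply]
      ext (i | i)
      · simp only [Sum.elim_inl, Matrix.sub_mulVec, Matrix.smul_mulVec,
          Matrix.one_mulVec, Matrix.mulVec_mulVec, ← hBD]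
        have := congrFun h1 i
        simp only [Pi.add_apply, Pi.smul_apply] at this
        simp only [Pi.add_apply, Pi.sub_apply, Pi.smul_apply, Pi.zero_apply]
        simp only [Sum.elim_comp_inl, Sum.elim_comp_inr, Matrix.mulVec_mulVec, ← hBD,
          smul_eq_mul] at this ⊢
        linear_combination this
      · simpa using congrFun h3 i
    -- full column rank ⇒ kernel trivial
    have hcard : Fintype.card (Fin n₁ ⊕ Fin n₂) = n₁ + n₂ := by simp
    have hkerbot : LinearMap.ker R.mulVecLin = ⊥ := by
      have hrn := LinearMap.finrank_range_add_finrank_ker R.mulVecLin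
      have hdom : Module.finrank ℂ ((Fin n₁ ⊕ Fin n₂) → ℂ) = n₁ + n₂ := by
        rw [Module.finrank_fintype_fun_eq_card, hcard]
      rw [hdom] at hrn
      have : Module.finrank ℂ (LinearMap.ker R.mulVecLin) = 0 := by
        have : R.rank = Module.finrank ℂ (LinearMap.range R.mulVecLin) := rfl
        omega
      exact Submodule.finrank_eq_zero.mp this
    have hvec0 : Sum.elim x ((D.map Complex.ofReal) *ᵥ z) = 0 := by
      have : Sum.elim x ((D.map Complex.ofReal) *ᵥ z) ∈ LinearMap.ker R.mulVecLin := hker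
      rw [hkerbot] at this; exact this
    have hDz : (D.map Complex.ofReal) *ᵥ z = 0 := by
      ext i; exact congrFun hvec0 (Sum.inr i)
    exact hzz (hΓD μ z h2 hDz)
end

section
/- Let x, s₁, s₂, s₃ ∈ ℝ² with x ≠ sᵢ for each i, and suppose the points s₁, s₂, s₃ form an equilateral triangle containing x strictly in its interior. Define the unit vectors uᵢ = (x − sᵢ)/‖x − sᵢ‖ and J = Σᵢ uᵢuᵢᵀ ∈ ℝ^{2×2}. Then J is positive definite. -/
open Matrix

theorem stmt6 (x : EuclideanSpace ℝ (Fin 2)) (s : Fin 3 → EuclideanSpace ℝ (Fin 2))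
    (hx : ∀ i, x ≠ s i)
    (hequi : ‖s 0 - s 1‖ = ‖s 1 - s 2‖ ∧ ‖s 1 - s 2‖ = ‖s 2 - s 0‖ ∧ 0 < ‖s 0 - s 1‖)
    (hint : x ∈ interior (convexHull ℝ (Set.range s)))
    (u : Fin 3 → EuclideanSpace ℝ (Fin 2))
    (hu : ∀ i, u i = ‖x - s i‖⁻¹ • (x - s i))
    (J : Matrix (Fin 2) (Fin 2) ℝ)
    (hJ : J = ∑ i : Fin 3, Matrix.of fun a b => u i a * u i b) :
    J.PosDef := by
  refine Matrix.PosDef.of_dotProduct_mulVec_pos ?_ ?_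
  · -- Hermitian
    ext a b
    simp [hJ, Matrix.conjTranspose_apply, Matrix.sum_apply, Matrix.of_apply, mul_comm]
  · intro v hv
    -- the quadratic form is the sum of squares of c i
    set c : Fin 3 → ℝ := fun i => ∑ a, u i a * v a with hc
    have key : dotProduct (star v) (J *ᵥ v) = ∑ i : Fin 3, (c i)^2 := by
      simp only [hJ, hc, dotProduct, Matrix.mulVec, Fin.sum_univ_two,
        Fin.sum_univ_three, Matrix.sum_apply, Matrix.add_apply, Matrix.of_apply,
        Pi.star_apply, star_trivial]
      ring
    rw [key]
    -- nonnegativity of each term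
    have hnn : ∀ i ∈ Finset.univ, (0:ℝ) ≤ (c i)^2 := fun i _ => sq_nonneg _
    -- suffices: some c i ≠ 0
    suffices hex : ∃ i, c i ≠ 0 by
      obtain ⟨i, hi⟩ := hex
      exact Finset.sum_pos' hnn ⟨i, Finset.mem_univ i, by positivity⟩
    by_contra hcon
    push_neg at hcon
    -- then every s i lies on the line through x orthogonal to v
    have hnorm : ∀ i, ‖x - s i‖ ≠ 0 := fun i =>
      norm_ne_zero_iff.mpr (sub_ne_zero.mpr (hx i))
    have h0 : ∀ i, ∑ a, (x a - s i a) * v a = 0 := by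
      intro i
      have := hcon i
      rw [hc] at this
      simp only [hu i, PiLp.smul_apply, PiLp.sub_apply, smul_eq_mul] at this
      have h2 : ‖x - s i‖⁻¹ * ∑ a, (x a - s i a) * v a = 0 := by
        rw [Finset.mul_sum]
        convert this using 2 with a
        ring
      rcases mul_eq_zero.mp h2 with h | h
      · exact absurd (inv_eq_zero.mp h) (hnorm i)
      · exact h
    set C : ℝ := ∑ a, x a * v a with hC
    set H : Set (EuclideanSpace ℝ (Fin 2)) := {y | ∑ a, y a * v a = C} with hH
    have hconv : Convex ℝ H := by
      intro y hy z hz p q hp hq hpq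
      simp only [hH, Set.mem_setOf_eq, Fin.sum_univ_two] at *
      simp only [PiLp.add_apply, PiLp.smul_apply, smul_eq_mul]
      linear_combination p * hy + q * hz + C * hpq
    have hsub : Set.range s ⊆ H := by
      rintro _ ⟨i, rfl⟩
      have := h0 i
      simp only [hH, Set.mem_setOf_eq, hC, Fin.sum_univ_two] at *
      linarith
    have hhull : convexHull ℝ (Set.range s) ⊆ H := convexHull_min hsub hconv
    have hxint : x ∈ interior H := interior_mono hhull hint
    rw [mem_interior_iff_mem_nhds, Metric.mem_nhds_iff] at hxint
    obtain ⟨ε, hε, hball⟩ := hxint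
    -- v is nonzero, so ∑ v a ^2 > 0
    have hS : 0 < v 0 ^ 2 + v 1 ^ 2 := by
      obtain ⟨a, ha⟩ := Function.ne_iff.mp hv
      fin_cases a <;> simp at ha <;>
        [nlinarith [sq_nonneg (v 1), pow_pos (abs_pos.mpr ha) 2, sq_abs (v 0)];
         nlinarith [sq_nonneg (v 0), pow_pos (abs_pos.mpr ha) 2, sq_abs (v 1)]]
    set vE : EuclideanSpace ℝ (Fin 2) := (WithLp.equiv 2 _).symm v with hvE
    have hvnorm : ‖vE‖ = Real.sqrt (v 0 ^ 2 + v 1 ^ 2) := by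
      rw [EuclideanSpace.norm_eq]
      congr 1
      simp [hvE, Fin.sum_univ_two, sq]
    have hvpos : 0 < ‖vE‖ := by rw [hvnorm]; exact Real.sqrt_pos.mpr hS
    set t : ℝ := ε / (2 * ‖vE‖) with ht
    have htpos : 0 < t := by positivity
    have hdist : dist (x + t • vE) x < ε := by
      rw [dist_self_add_left, norm_smul, Real.norm_eq_abs, abs_of_pos htpos, ht]
      rw [div_mul_eq_mul_div, mul_comm (2:ℝ) ‖vE‖, ← div_div, mul_div_assoc,
        div_self (ne_of_gt hvpos), mul_one]
      linarith
    have hmem : x + t • vE ∈ H := hball (by simpa [Metric.mem_ball] using hdist)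
    simp only [hH, Set.mem_setOf_eq, hC, Fin.sum_univ_two, PiLp.add_apply,
      PiLp.smul_apply, smul_eq_mul, hvE, WithLp.equiv_symm_apply, WithLp.ofLp_toLp] at hmem
    nlinarith
end
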